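/- In the winner-bid auction with tie-breaker favoring the high-valuation agent, if σ = (σ_l, σ_h) is a Nash equilibrium in which the high-valuation agent bids p with probability one with c_l < p ≤ c_h, then σ_l(p) ≥ 1/(2(c_h − c_l) − 2(p − c_l) + 1), where c_l = v_l/2 and c_h = v_h/2. -/
import Mathlib


open Finset Filter

/-- Payoff to the low-valuation agent in the winner-bid auction when she bids `b`
and the high-valuation agent bids `r` (ties won by the high-valuation agent). -/
noncomputable def UlWB (vl : ℕ) (b r : ℕ) : ℝ := if r < b then (vl : ℝ) - b else (r : ℝ)

/-- Payoff to the high-valuation agent in the winner-bid auction when she bids `b`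
and the low-valuation agent bids `r` (ties won by the high-valuation agent). -/
noncomputable def UhWB (vh : ℕ) (b r : ℕ) : ℝ := if r ≤ b then (vh : ℝ) - b else (r : ℝ)

/-- A mixed strategy on the bid set `{0, ..., pbar}`. -/
def IsMixed (pbar : ℕ) (σ : ℕ → ℝ) : Prop :=
  (∀ b, 0 ≤ σ b) ∧ (∀ b, pbar < b → σ b = 0) ∧ ∑ b ∈ Finset.range (pbar + 1), σ b = 1

/-- Expected payoff for the low-valuation agent of bidding `b` against `σh`. -/
noncomputable def eUl (pbar vl : ℕ) (σh : ℕ → ℝ) (b : ℕ) : ℝ :=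
  ∑ r ∈ Finset.range (pbar + 1), σh r * UlWB vl b r

/-- Expected payoff for the high-valuation agent of bidding `b` against `σl`. -/
noncomputable def eUh (pbar vh : ℕ) (σl : ℕ → ℝ) (b : ℕ) : ℝ :=
  ∑ r ∈ Finset.range (pbar + 1), σl r * UhWB vh b r

/-- Nash equilibrium of the winner-bid auction. -/
def IsNashWB (pbar vl vh : ℕ) (σl σh : ℕ → ℝ) : Prop :=
  IsMixed pbar σl ∧ IsMixed pbar σh ∧
  (∀ b ≤ pbar, 0 < σl b → ∀ b' ≤ pbar, eUl pbar vl σh b' ≤ eUl pbar vl σh b) ∧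
  (∀ b ≤ pbar, 0 < σh b → ∀ b' ≤ pbar, eUh pbar vh σl b' ≤ eUh pbar vh σl b)

/-- Expected payoff of the low-valuation agent at a mixed profile. -/
noncomputable def piL (pbar vl : ℕ) (σl σh : ℕ → ℝ) : ℝ :=
  ∑ b ∈ Finset.range (pbar + 1), σl b * eUl pbar vl σh b

/-- Expected payoff of the high-valuation agent at a mixed profile. -/
noncomputable def piH (pbar vh : ℕ) (σl σh : ℕ → ℝ) : ℝ :=
  ∑ b ∈ Finset.range (pbar + 1), σh b * eUh pbar vh σl b

/-- Weak payoff monotonicity for the low-valuation agent. -/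
def WPMl (pbar vl : ℕ) (σl σh : ℕ → ℝ) : Prop :=
  ∀ a ≤ pbar, ∀ b ≤ pbar, σl b < σl a → eUl pbar vl σh b < eUl pbar vl σh a

/-- Weak payoff monotonicity for the high-valuation agent. -/
def WPMh (pbar vh : ℕ) (σl σh : ℕ → ℝ) : Prop :=
  ∀ a ≤ pbar, ∀ b ≤ pbar, σh b < σh a → eUh pbar vh σl b < eUh pbar vh σl a

/-- Expected bid under a mixed strategy. -/
noncomputable def Ebid (pbar : ℕ) (σ : ℕ → ℝ) : ℝ :=
  ∑ b ∈ Finset.range (pbar + 1), σ b * b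

/-- In a Nash equilibrium of the winner-bid auction in which the high-valuation agent bids
`p` with probability one, with `cl < p ≤ ch`, one has
`σl p ≥ 1 / (2*(ch - cl) - 2*(p - cl) + 1)`. -/
theorem stmt9 (pbar vl vh cl ch : ℕ) (hvl : vl = 2 * cl) (hvh : vh = 2 * ch)
    (hcl : 0 < cl) (hclch : cl < ch) (hpbar : ch ≤ pbar)
    (σl σh : ℕ → ℝ) (hNash : IsNashWB pbar vl vh σl σh)
    (p : ℕ) (hp1 : cl < p) (hp2 : p ≤ ch) (hδ : σh p = 1) :
    (1 : ℝ) / ((2 * (ch - cl) - 2 * (p - cl) + 1 : ℕ) : ℝ) ≤ σl p := by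
  obtain ⟨⟨hl0, hlsupp, hlsum⟩, ⟨hh0, hhsupp, hhsum⟩, hNl, hNh⟩ := hNash
  have hppbar : p ≤ pbar := le_trans hp2 hpbar
  have hpmem : p ∈ Finset.range (pbar + 1) := by
    simp only [Finset.mem_range]; omega
  -- σh is the point mass at p
  have hσh : ∀ r, r ≠ p → σh r = 0 := by
    intro r hr
    by_cases hrb : r ≤ pbar
    · have hkey := Finset.sum_erase_add (Finset.range (pbar+1)) σh hpmem
      have hsum0 : ∑ b ∈ (Finset.range (pbar+1)).erase p, σh b = 0 := by
        rw [hδ] at hkey; linarith [hhsum]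
      refine (Finset.sum_eq_zero_iff_of_nonneg (fun b _ => hh0 b)).mp hsum0 r ?_
      rw [Finset.mem_erase, Finset.mem_range]; exact ⟨hr, by omega⟩
    · exact hhsupp r (by omega)
  have heUl : ∀ b, eUl pbar vl σh b = UlWB vl b p := by
    intro b
    unfold eUl
    rw [Finset.sum_eq_single_of_mem p hpmem]
    · rw [hδ, one_mul]
    · intro r _ hr; rw [hσh r hr, zero_mul]
  -- σl puts no mass above p
  have hσl : ∀ b, p < b → σl b = 0 := by
    intro b hb
    by_cases hbb : b ≤ pbar
    · by_contra h
      have hpos : 0 < σl b := lt_of_le_of_ne (hl0 b) (Ne.symm h)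
      have hineq := hNl b hbb hpos 0 (Nat.zero_le _)
      rw [heUl, heUl] at hineq
      unfold UlWB at hineq
      rw [if_neg (by omega), if_pos hb] at hineq
      have hcast : (2 * cl : ℕ) < p + b := by omega
      have : ((2 * cl : ℕ) : ℝ) < (p : ℝ) + b := by exact_mod_cast hcast
      rw [hvl] at hineq
      push_cast at this hineq
      linarith
    · exact hlsupp b (by omega)
  -- expected payoff of h at p
  have heUhp : eUh pbar vh σl p = (vh : ℝ) - p := by
    unfold eUh
    rw [Finset.sum_congr rfl (fun r hr => ?_), ← Finset.sum_mul, hlsum, one_mul]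
    by_cases h : r ≤ p
    · unfold UhWB; rw [if_pos h]
    · rw [hσl r (by omega), zero_mul, zero_mul]
  -- expected payoff of h at p - 1
  have hq1 : (p - 1) + 1 = p := by omega
  set q := p - 1 with hqdef
  have heUhq : eUh pbar vh σl q = (1 - σl p) * ((vh : ℝ) - q) + σl p * p := by
    unfold eUh
    rw [← Finset.sum_erase_add _ _ hpmem]
    have h1 : ∀ r ∈ (Finset.range (pbar+1)).erase p,
        σl r * UhWB vh q r = σl r * ((vh : ℝ) - q) := by
      intro r hr
      obtain ⟨hrp, _⟩ := Finset.mem_erase.mp hr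
      by_cases h : r ≤ q
      · unfold UhWB; rw [if_pos h]
      · rw [hσl r (by omega), zero_mul, zero_mul]
    rw [Finset.sum_congr rfl h1, ← Finset.sum_mul]
    have herase : ∑ r ∈ (Finset.range (pbar+1)).erase p, σl r = 1 - σl p := by
      have := Finset.sum_erase_add (Finset.range (pbar+1)) σl hpmem
      linarith [hlsum]
    rw [herase]
    have hU : UhWB vh q p = (p : ℝ) := by unfold UhWB; rw [if_neg (by omega)]
    rw [hU]
  -- Nash condition for h
  have hineq := hNh p hppbar (by rw [hδ]; norm_num) q (by omega)
  rw [heUhp, heUhq] at hineq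
  -- cast computations
  have hqc : (q : ℝ) = (p : ℝ) - 1 := by
    have := congrArg (fun n : ℕ => (n : ℝ)) hq1
    push_cast at this; linarith
  have hvhc : (vh : ℝ) = 2 * ch := by rw [hvh]; push_cast; ring
  have hNnat : 2 * (ch - cl) - 2 * (p - cl) + 1 = 2 * ch - 2 * p + 1 := by omega
  have hNc : ((2 * (ch - cl) - 2 * (p - cl) + 1 : ℕ) : ℝ) = 2 * (ch : ℝ) - 2 * p + 1 := by
    rw [hNnat]
    have h2 : ((2 * ch - 2 * p : ℕ) : ℝ) = 2 * (ch : ℝ) - 2 * p := by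
      rw [Nat.cast_sub (by omega)]; push_cast; ring
    push_cast [h2]
    ring
  have hpc : (p : ℝ) ≤ (ch : ℝ) := by exact_mod_cast hp2
  have hD : (0 : ℝ) < 2 * (ch : ℝ) - 2 * p + 1 := by linarith
  rw [hNc, div_le_iff₀ hD]
  nlinarith [hineq, hqc, hvhc]
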